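/- Let K ⊂ X ⊂ ℝⁿ with X compact and K closed, let I_K be the indicator of K, and define the averaged modulus of continuity ω̄_{I_K}(t) = ∫_X ω_{I_K}^x(t) dx. Then ω̄_{I_K}(t) ≤ vol(∂K(t)), where ∂K(t) = { x ∈ X : dist(x, ∂K) ≤ t } is the t-neighborhood of the boundary of K within X. -/

import Mathlib

open MeasureTheory Set

/-- If `x ∈ K`, `y ∉ K`, `K` closed, then the segment from `x` to `y` meets the frontier. -/
lemma exists_frontier_dist_le {E : Type*} [NormedAddCommGroup E] [NormedSpace ℝ E]
    {K : Set E} (hK : IsClosed K) {x y : E} (hx : x ∈ K) (hy : y ∉ K) :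
    ∃ z ∈ frontier K, dist x z ≤ dist x y ∧ dist z y ≤ dist x y := by
  by_cases hemp : (segment ℝ x y ∩ frontier K).Nonempty
  · obtain ⟨z, hzseg, hzf⟩ := hemp
    have h := dist_add_dist_of_mem_segment hzseg
    exact ⟨z, hzf, by linarith [dist_nonneg (x := z) (y := y)],
      by linarith [dist_nonneg (x := x) (y := z)]⟩
  · exfalso
    rw [Set.not_nonempty_iff_eq_empty] at hemp
    have hpre : IsPreconnected (segment ℝ x y) := (convex_segment x y).isPreconnected
    have hsub : segment ℝ x y ⊆ interior K ∪ (closure K)ᶜ := by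
      intro z hz
      have hzf : z ∉ frontier K := fun h => by
        have : z ∈ (segment ℝ x y ∩ frontier K) := ⟨hz, h⟩
        simp [hemp] at this
      by_cases hzc : z ∈ closure K
      · left
        rcases (closure_eq_interior_union_frontier K ▸ hzc) with h | h
        · exact h
        · exact absurd h hzf
      · right; exact hzc
    have hxK : x ∈ interior K := by
      have hxc : x ∈ closure K := subset_closure hx
      rcases hsub (left_mem_segment ℝ x y) with h | h
      · exact h
      · exact absurd hxc h
    have hyc : y ∈ (closure K)ᶜ := by rw [hK.closure_eq]; exact hy
    obtain ⟨z, _, hz1, hz2⟩ := hpre (interior K) (closure K)ᶜ isOpen_interior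
      isClosed_closure.isOpen_compl hsub ⟨x, left_mem_segment ℝ x y, hxK⟩
      ⟨y, right_mem_segment ℝ x y, hyc⟩
    exact hz2 (subset_closure (interior_subset hz1))

/-- The averaged modulus of continuity of the indicator of `K` is bounded by the
volume of the `t`-neighborhood of the boundary of `K` within `X`. -/
theorem averaged_modulus_le_vol_boundary_nbhd (n : ℕ)
    (X K : Set (EuclideanSpace ℝ (Fin n))) (hX : IsCompact X)
    (hKclosed : IsClosed K) (hKX : K ⊆ X) (t : ℝ) (ht : 0 ≤ t) :
    (∫ x in X, sSup {v : ℝ | ∃ y ∈ X, ‖y - x‖ ≤ t ∧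
        v = |K.indicator (fun _ => (1 : ℝ)) y - K.indicator (fun _ => (1 : ℝ)) x|}) ≤
      (volume {x ∈ X | Metric.infDist x (frontier K) ≤ t}).toReal := by
  set f : EuclideanSpace ℝ (Fin n) → ℝ := fun x => sSup {v : ℝ | ∃ y ∈ X, ‖y - x‖ ≤ t ∧
      v = |K.indicator (fun _ => (1 : ℝ)) y - K.indicator (fun _ => (1 : ℝ)) x|} with hf
  set S : Set (EuclideanSpace ℝ (Fin n)) := {x ∈ X | Metric.infDist x (frontier K) ≤ t} with hS
  -- S is closed, hence measurable, and contained in X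
  have hSX : S ⊆ X := fun x hx => hx.1
  have hSclosed : IsClosed S := by
    have : S = X ∩ (fun x => Metric.infDist x (frontier K)) ⁻¹' (Iic t) := by
      ext x; simp [hS, Set.mem_setOf_eq]
    rw [this]
    exact hX.isClosed.inter (isClosed_Iic.preimage (Metric.continuous_infDist_pt _))
  have hSmeas : MeasurableSet S := hSclosed.measurableSet
  have hSvol : volume S ≠ ⊤ :=
    (lt_of_le_of_lt (measure_mono hSX) hX.measure_lt_top).ne
  -- key pointwise bound on X : f x ≤ S.indicator 1 x
  have key : ∀ x ∈ X, f x ≤ S.indicator (fun _ => (1 : ℝ)) x := by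
    intro x hx
    have hbdd : ∀ v ∈ {v : ℝ | ∃ y ∈ X, ‖y - x‖ ≤ t ∧
        v = |K.indicator (fun _ => (1 : ℝ)) y - K.indicator (fun _ => (1 : ℝ)) x|}, v ≤ 1 := by
      rintro v ⟨y, _, _, rfl⟩
      rcases Set.indicator_eq_zero_or_self K (fun _ => (1:ℝ)) y with h1 | h1 <;>
        rcases Set.indicator_eq_zero_or_self K (fun _ => (1:ℝ)) x with h2 | h2 <;>
        simp [h1, h2] <;> norm_num
    have hne : (0:ℝ) ∈ {v : ℝ | ∃ y ∈ X, ‖y - x‖ ≤ t ∧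
        v = |K.indicator (fun _ => (1 : ℝ)) y - K.indicator (fun _ => (1 : ℝ)) x|} :=
      ⟨x, hx, by simp [ht], by simp⟩
    by_cases hxS : x ∈ S
    · rw [Set.indicator_of_mem hxS]
      exact csSup_le ⟨0, hne⟩ hbdd
    · rw [Set.indicator_of_notMem hxS]
      apply csSup_le ⟨0, hne⟩
      rintro v ⟨y, hy, hyt, rfl⟩
      -- show the indicators agree, else x would be near the frontier
      have : K.indicator (fun _ => (1 : ℝ)) y = K.indicator (fun _ => (1 : ℝ)) x := by
        by_contra hne'
        have : ∃ z ∈ frontier K, dist x z ≤ t := by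
          by_cases hyK : y ∈ K
          · by_cases hxK : x ∈ K
            · exact absurd (by simp [hyK, hxK]) hne'
            · obtain ⟨z, hz, _, hdz⟩ := exists_frontier_dist_le hKclosed hyK hxK
              refine ⟨z, hz, ?_⟩
              rw [dist_comm x z]
              calc dist z x ≤ dist y x := hdz
                _ ≤ t := by rw [dist_eq_norm]; exact hyt
          · by_cases hxK : x ∈ K
            · obtain ⟨z, hz, hdz, _⟩ := exists_frontier_dist_le hKclosed hxK hyK
              exact ⟨z, hz, hdz.trans (by rw [dist_comm, dist_eq_norm]; exact hyt)⟩
            · exact absurd (by simp [hyK, hxK]) hne'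
        obtain ⟨z, hz, hdz⟩ := this
        exact hxS ⟨hx, (Metric.infDist_le_dist_of_mem hz).trans hdz⟩
      simp [this]
  -- integrability of the indicator of S
  have hSint : IntegrableOn (S.indicator (fun _ => (1 : ℝ))) X := by
    apply Integrable.integrableOn
    rw [integrable_indicator_iff hSmeas]
    exact integrableOn_const hSvol
  by_cases hfint : IntegrableOn f X
  · calc (∫ x in X, f x) ≤ ∫ x in X, S.indicator (fun _ => (1 : ℝ)) x :=
        setIntegral_mono_on hfint hSint hX.isClosed.measurableSet key
    _ ≤ ∫ x, S.indicator (fun _ => (1 : ℝ)) x := by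
        rw [← integral_indicator hX.isClosed.measurableSet]
        apply integral_mono ((integrable_indicator_iff hX.isClosed.measurableSet).2 hSint.integrable)
          ((integrable_indicator_iff hSmeas).2 (integrableOn_const hSvol))
        intro x
        by_cases hxX : x ∈ X
        · rw [Set.indicator_of_mem hxX]
        · rw [Set.indicator_of_notMem hxX]
          exact Set.indicator_nonneg (fun _ _ => zero_le_one) x
    _ = (volume S).toReal := by
        rw [integral_indicator hSmeas]
        simp [Measure.restrict_apply, hSvol]
        rfl
  · rw [integral_undef hfint]
    exact ENNReal.toReal_nonneg
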